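/- Combining lemma (full statement): WLCWIS(P₁,P₂) = max_{1≤i,j≤n} WLCWIS(sᵢ,tⱼ) + (4n−2)·ℓ, where P₁ = A^{2n} s₁ YB s₂ YB … YB s_n Z^{2n} and P₂ = (ZYBA)^n t₁ ZYBA t₂ … ZYBA t_n (ZYBA)^n. -/

import Mathlib

open List

/-- `C` is a common weakly increasing subsequence of `A` and `B`. -/
def CWIS {σ : Type*} [LinearOrder σ] (A B C : List σ) : Prop :=
  C.Chain' (· ≤ ·) ∧ C.Sublist A ∧ C.Sublist B

/-- Length of a longest common weakly increasing subsequence. -/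
noncomputable def LCWIS {σ : Type*} [LinearOrder σ] (A B : List σ) : ℕ :=
  sSup {n | ∃ C : List σ, CWIS A B C ∧ C.length = n}

/-- Maximum total weight of a common weakly increasing subsequence. -/
noncomputable def WLCWIS {σ : Type*} [LinearOrder σ] (w : σ → ℕ) (A B : List σ) : ℕ :=
  sSup {n | ∃ C : List σ, CWIS A B C ∧ (C.map w).sum = n}

/-- Blow-up: replace each symbol `a` by `w a` consecutive copies of `a`. -/
def blow {σ : Type*} (w : σ → ℕ) (X : List σ) : List σ :=
  X.flatMap fun a => List.replicate (w a) a

/-- The sequence P₁ = A^{2n} s₁ YB s₂ YB … YB sₙ Z^{2n}. -/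
def P1 {Ω : Type*} {n : ℕ} (s : Fin n → List Ω) (a b y z : Ω) : List Ω :=
  List.replicate (2*n) a ++ List.intercalate [y, b] ((List.finRange n).map s) ++
    List.replicate (2*n) z

/-- The sequence P₂ = (ZYBA)ⁿ t₁ ZYBA t₂ … ZYBA tₙ (ZYBA)ⁿ. -/
def P2 {Ω : Type*} {n : ℕ} (t : Fin n → List Ω) (a b y z : Ω) : List Ω :=
  (List.replicate n [z, y, b, a]).flatten ++
    List.intercalate [z, y, b, a] ((List.finRange n).map t) ++
    (List.replicate n [z, y, b, a]).flatten
open List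

section Helpers
variable {α : Type*}

lemma intercalate_nil' (sep : List α) : intercalate sep [] = [] := by simp [intercalate]

lemma intercalate_single (sep l : List α) : intercalate sep [l] = l := by simp [intercalate]

lemma intercalate_cons₂ (sep l l' : List α) (L : List (List α)) :
    intercalate sep (l :: l' :: L) = l ++ sep ++ intercalate sep (l' :: L) := by
  simp [intercalate]

lemma intercalate_eq_cons_flatMap (sep : List α) :
    ∀ (l : List α) (L : List (List α)),
      intercalate sep (l :: L) = l ++ L.flatMap (fun x => sep ++ x) := by
  intro l L
  induction L generalizing l with
  | nil => simp [intercalate_single]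
  | cons l' L ih =>
    rw [intercalate_cons₂, ih l', List.flatMap_cons]
    simp [List.append_assoc]

lemma intercalate_append_of_ne_nil (sep : List α) :
    ∀ (L₁ L₂ : List (List α)), L₁ ≠ [] → L₂ ≠ [] →
      intercalate sep (L₁ ++ L₂) = intercalate sep L₁ ++ sep ++ intercalate sep L₂ := by
  intro L₁
  induction L₁ with
  | nil => intro L₂ h; simp at h
  | cons l L₁' ih =>
    intro L₂ _ h₂
    cases L₁' with
    | nil =>
      cases L₂ with
      | nil => simp at h₂
      | cons l₂ L₂' => rw [List.singleton_append, intercalate_cons₂, intercalate_single]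
    | cons l' L₁'' =>
      have h3 := ih L₂ (by simp) h₂
      rw [show (l :: l' :: L₁'') ++ L₂ = l :: l' :: (L₁'' ++ L₂) from rfl]
      rw [List.cons_append] at h3
      conv_lhs => rw [intercalate_cons₂]
      rw [h3]
      conv_rhs => rw [intercalate_cons₂]
      simp [List.append_assoc]

lemma intercalate_replicate_nil (sep : List α) :
    ∀ m : ℕ, intercalate sep (replicate (m+1) ([] : List α)) = (replicate m sep).flatten := by
  intro m
  induction m with
  | zero => simp [intercalate_single]
  | succ m ih =>
    rw [show (m+1)+1 = (m+1)+1 from rfl]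
    rw [show replicate ((m+1)+1) ([] : List α) = [] :: replicate (m+1) ([] : List α) from rfl]
    rw [show replicate (m+1) ([] : List α) = [] :: replicate m ([] : List α) from rfl]
    rw [intercalate_cons₂]
    rw [show ([] : List α) :: replicate m ([] : List α) = replicate (m+1) ([] : List α) from rfl]
    rw [ih]
    simp [replicate_succ]

lemma intercalate_append_single (sep u : List α) :
    ∀ (M : List (List α)), M ≠ [] →
      intercalate sep (M ++ [u]) = intercalate sep M ++ sep ++ u := by
  intro M
  induction M with
  | nil => intro h; simp at h
  | cons m M' ih =>
    intro _
    cases M' with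
    | nil => rw [intercalate_single]; rw [show ([m] ++ [u] : List (List α)) = [m, u] from rfl,
        intercalate_cons₂, intercalate_single]
    | cons m' M'' =>
      have h3 := ih (by simp)
      rw [show (m :: m' :: M'') ++ [u] = m :: m' :: (M'' ++ [u]) from rfl]
      rw [List.cons_append] at h3
      conv_lhs => rw [intercalate_cons₂]
      rw [h3]
      conv_rhs => rw [intercalate_cons₂]
      simp [List.append_assoc]

lemma reverse_intercalate (sep : List α) :
    ∀ (L : List (List α)),
      (intercalate sep L).reverse = intercalate sep.reverse ((L.map reverse).reverse) := by
  intro L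
  induction L with
  | nil => simp [intercalate_nil']
  | cons l L' ih =>
    cases L' with
    | nil => simp [intercalate_single]
    | cons l' L'' =>
      rw [intercalate_cons₂]
      simp only [List.reverse_append]
      rw [ih]
      have hM : ((l' :: L'').map reverse).reverse ≠ [] := by simp
      rw [show ((l :: l' :: L'').map reverse).reverse
            = ((l' :: L'').map reverse).reverse ++ [l.reverse] by simp]
      rw [intercalate_append_single _ _ _ hM]
      simp [List.append_assoc]

lemma mem_intercalate' {x : α} {sep : List α} :
    ∀ {L : List (List α)}, x ∈ intercalate sep L → x ∈ sep ∨ ∃ l ∈ L, x ∈ l := by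
  intro L
  induction L with
  | nil => intro h; rw [intercalate_nil'] at h; simp at h
  | cons l L' ih =>
    cases L' with
    | nil => intro h; rw [intercalate_single] at h; exact Or.inr ⟨l, by simp, h⟩
    | cons l' L'' =>
      rw [intercalate_cons₂]
      intro h
      rcases List.mem_append.1 h with h | h
      · rcases List.mem_append.1 h with h | h
        · exact Or.inr ⟨l, by simp, h⟩
        · exact Or.inl h
      · rcases ih h with h | ⟨u, hu, hxu⟩
        · exact Or.inl h
        · exact Or.inr ⟨u, List.mem_cons_of_mem _ hu, hxu⟩

lemma filter_intercalate (p : α → Bool) (sep : List α) (hsep : sep.filter p = []) :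
    ∀ W : List (List α), (intercalate sep W).filter p = (W.map (List.filter p)).flatten := by
  intro W
  induction W with
  | nil => simp [intercalate_nil']
  | cons l W' ih =>
    cases W' with
    | nil => simp [intercalate_single]
    | cons l' W'' =>
      rw [intercalate_cons₂]
      simp only [List.filter_append, hsep, ih]
      simp

lemma filter_intercalate_blocks_nil (p : α → Bool) (sep : List α) :
    ∀ L : List (List α), (∀ l ∈ L, l.filter p = []) →
      (intercalate sep L).filter p = (replicate (L.length - 1) (sep.filter p)).flatten := by
  intro L
  induction L with
  | nil => simp [intercalate_nil']
  | cons l L' ih =>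
    cases L' with
    | nil => intro h; rw [intercalate_single]; simp [h l (by simp)]
    | cons l' L'' =>
      intro h
      rw [intercalate_cons₂]
      simp only [List.filter_append, h l (by simp), ih (fun u hu => h u (by simp [hu]))]
      simp only [List.length_cons, Nat.add_sub_cancel]
      rw [replicate_succ]
      simp

lemma intercalate_split (sep : List α) :
    ∀ (j : ℕ) (L : List (List α)) (hj : j < L.length),
      intercalate sep L = (L.take j).flatMap (fun l => l ++ sep) ++ L[j] ++
        (L.drop (j+1)).flatMap (fun l => sep ++ l) := by
  intro j
  induction j with
  | zero =>
    intro L hj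
    cases L with
    | nil => simp at hj
    | cons l L' => simpa using intercalate_eq_cons_flatMap sep l L'
  | succ j ih =>
    intro L hj
    cases L with
    | nil => simp at hj
    | cons l L' =>
      cases L' with
      | nil => simp at hj
      | cons l' L'' =>
        rw [intercalate_cons₂, ih (l' :: L'') (by simpa using hj)]
        simp [List.append_assoc]

end Helpers
section Strip
variable {α : Type*}

lemma cons_sublist_append_right' {x : α} {R B : List α} :
    ∀ {A : List α}, x :: R <+ A ++ B → x ∉ A → x :: R <+ B := by
  intro A
  induction A with
  | nil => intro h _; exact h
  | cons u A' ih =>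
    intro h hx
    rw [List.cons_append] at h
    cases h with
    | cons _ h' => exact ih h' (fun hm => hx (List.mem_cons_of_mem _ hm))
    | cons_cons _ h' => exact absurd List.mem_cons_self hx

lemma sublist_append_right_of_disjoint {R A B : List α}
    (h : R <+ A ++ B) (hd : ∀ u ∈ R, u ∉ A) : R <+ B := by
  cases R with
  | nil => exact List.nil_sublist B
  | cons u R' => exact cons_sublist_append_right' h (hd u List.mem_cons_self)

lemma strip_one {x : α} {R : List α} {sep S₁ S₂ : List α}
    (hsep : sep = S₁ ++ x :: S₂) (hx1 : x ∉ S₁) :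
    ∀ {L : List (List α)}, (∀ l ∈ L, x ∉ l) → x :: R <+ intercalate sep L →
      ∃ l₀ L', L = l₀ :: L' ∧ R <+ S₂ ++ intercalate sep L' := by
  intro L hL h
  cases L with
  | nil =>
    rw [intercalate_nil'] at h
    exact absurd (List.eq_nil_of_sublist_nil h) (by simp)
  | cons l₀ L' =>
    cases L' with
    | nil =>
      rw [intercalate_single] at h
      exact absurd (h.subset List.mem_cons_self) (hL l₀ (by simp))
    | cons l₁ L'' =>
      rw [intercalate_cons₂] at h
      rw [List.append_assoc] at h
      have h2 : x :: R <+ sep ++ intercalate sep (l₁ :: L'') :=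
        cons_sublist_append_right' h (hL l₀ (by simp))
      set T := intercalate sep (l₁ :: L'') with hT
      rw [hsep, List.append_assoc, List.cons_append] at h2
      have h3 : x :: R <+ x :: (S₂ ++ T) :=
        cons_sublist_append_right' h2 hx1
      exact ⟨l₀, l₁ :: L'', rfl, List.cons_sublist_cons.mp h3⟩

lemma strip_rep {x : α} {sep S₁ S₂ : List α}
    (hsep : sep = S₁ ++ x :: S₂) (hx1 : x ∉ S₁) (hx2 : x ∉ S₂) :
    ∀ (k : ℕ) (R : List α) (L : List (List α)), (∀ l ∈ L, x ∉ l) → (∀ u ∈ R, u ∉ S₂) →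
      replicate k x ++ R <+ intercalate sep L → R <+ intercalate sep (L.drop k) := by
  intro k
  induction k with
  | zero => intro R L _ _ h; simpa using h
  | succ k ih =>
    intro R L hL hR h
    rw [List.replicate_succ, List.cons_append] at h
    obtain ⟨l₀, L', rfl, h2⟩ := strip_one hsep hx1 hL h
    have h3 : replicate k x ++ R <+ intercalate sep L' := by
      refine sublist_append_right_of_disjoint h2 ?_
      intro u hu
      rcases List.mem_append.1 hu with hu | hu
      · rcases (List.mem_replicate.1 hu) with ⟨_, rfl⟩; exact hx2
      · exact hR u hu
    have := ih R L' (fun l hl => hL l (List.mem_cons_of_mem _ hl)) hR h3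
    simpa using this

lemma strip_back {x : α} {sep S₁ S₂ : List α}
    (hsep : sep = S₁ ++ x :: S₂) (hx1 : x ∉ S₂) (hx2 : x ∉ S₁)
    (k : ℕ) (R : List α) (L : List (List α)) (hL : ∀ l ∈ L, x ∉ l) (hR : ∀ u ∈ R, u ∉ S₁)
    (h : R ++ replicate k x <+ intercalate sep L) :
    R <+ intercalate sep (L.take (L.length - k)) := by
  have hrev : replicate k x ++ R.reverse <+ intercalate sep.reverse ((L.map reverse).reverse) := by
    have := h.reverse
    rw [List.reverse_append, List.reverse_replicate, reverse_intercalate] at this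
    exact this
  have hsep' : sep.reverse = S₂.reverse ++ x :: S₁.reverse := by
    rw [hsep]; simp
  have hL' : ∀ l ∈ (L.map reverse).reverse, x ∉ l := by
    intro l hl
    rw [List.mem_reverse, List.mem_map] at hl
    obtain ⟨l', hl', rfl⟩ := hl
    simpa using hL l' hl'
  have hR' : ∀ u ∈ R.reverse, u ∉ S₁.reverse := by
    intro u hu; rw [List.mem_reverse] at hu; simpa using hR u hu
  have key := strip_rep hsep' (by simpa using hx1) (by simpa using hx2)
    k R.reverse ((L.map reverse).reverse) hL' hR' hrev
  have key2 := key.reverse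
  rw [List.reverse_reverse, reverse_intercalate, List.reverse_reverse] at key2
  have heq : ((((L.map reverse).reverse.drop k).map reverse).reverse)
      = L.take (L.length - k) := by
    rw [← List.map_reverse, List.reverse_drop]
    simp [← List.map_take, List.map_map]
  rw [heq] at key2
  exact key2

end Strip
section Slice
variable {α : Type*}

lemma flatten_take_of_nil_blocks {B : List (List α)} (hB : ∀ l ∈ B, l = []) :
    ∀ (M : List (List α)) (Q : ℕ), ((M ++ B).take Q).flatten = (M.take Q).flatten := by
  intro M Q
  rw [List.take_append, List.flatten_append]
  have : ((B.take (Q - M.length)).flatten) = [] := by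
    rw [List.flatten_eq_nil_iff]
    exact fun l hl => hB l (List.mem_of_mem_take hl)
  rw [this, List.append_nil]

lemma flatten_slice_padded {B : List (List α)} (hB : ∀ l ∈ B, l = []) :
    ∀ (A : List (List α)) (hA : ∀ l ∈ A, l = []) (M : List (List α)) (P Q : ℕ),
      (((A ++ M ++ B).drop P).take Q).flatten
        = ((M.drop (P - A.length)).take (Q - (A.length - P))).flatten := by
  intro A
  induction A with
  | nil =>
    intro _ M P Q
    simp only [List.nil_append, List.length_nil, Nat.zero_sub, Nat.sub_zero]
    rw [List.drop_append, List.take_append, List.flatten_append]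
    have h1 : (((B.drop (P - M.length)).take (Q - (M.drop P).length)).flatten) = [] := by
      rw [List.flatten_eq_nil_iff]
      exact fun l hl => hB l (List.mem_of_mem_drop (List.mem_of_mem_take hl))
    rw [h1, List.append_nil]
  | cons l A' ih =>
    intro hA M P Q
    have hl : l = [] := hA l (by simp)
    subst hl
    have hA' : ∀ u ∈ A', u = [] := fun u hu => hA u (by simp [hu])
    cases P with
    | zero =>
      cases Q with
      | zero => simp
      | succ Q' =>
        rw [show (([] :: A') ++ M ++ B) = [] :: (A' ++ M ++ B) from rfl]
        rw [List.drop_zero, List.take_succ_cons, List.flatten_cons, List.nil_append]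
        have := ih hA' M 0 Q'
        rw [List.drop_zero] at this
        rw [this]
        rw [show (([] : List α) :: A').length = A'.length + 1 from rfl]
        rw [show Q' + 1 - (A'.length + 1 - 0) = Q' - (A'.length - 0) by omega]
        simp [Nat.zero_sub]
    | succ P' =>
      rw [show (([] :: A') ++ M ++ B) = [] :: (A' ++ M ++ B) from rfl]
      rw [List.drop_succ_cons]
      have := ih hA' M P' Q
      rw [this]
      rw [show (([] : List α) :: A').length = A'.length + 1 from rfl]
      rw [show P' + 1 - (A'.length + 1) = P' - A'.length by omega]
      rw [show Q - (A'.length + 1 - (P' + 1)) = Q - (A'.length - P') by omega]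

end Slice

section ChainLen
variable {Ω : Type*} [LinearOrder Ω]

lemma chain_sublist_flatten_replicate {blk : List Ω} (hblk : blk.Pairwise (· > ·)) :
    ∀ (m : ℕ) (u : List Ω), u.Pairwise (· ≤ ·) → u <+ (replicate m blk).flatten →
      u.length ≤ m := by
  intro m
  induction m with
  | zero => intro u _ h; simp at h; simp [h]
  | succ m ih =>
    intro u hu h
    rw [List.replicate_succ, List.flatten_cons] at h
    obtain ⟨u₁, u₂, rfl, h₁, h₂⟩ := List.sublist_append_iff.mp h
    have hu₂ : u₂.Pairwise (· ≤ ·) := (List.pairwise_append.mp hu).2.1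
    have len₁ : u₁.length ≤ 1 := by
      rcases u₁ with _ | ⟨x, _ | ⟨x', u₁'⟩⟩
      · simp
      · simp
      · exfalso
        have hgt : (x :: x' :: u₁').Pairwise (· > ·) := hblk.sublist h₁
        have hle : (x :: x' :: u₁').Pairwise (· ≤ ·) := (List.pairwise_append.mp hu).1
        have h1 : x > x' := (List.pairwise_cons.mp hgt).1 x' (by simp)
        have h2 : x ≤ x' := (List.pairwise_cons.mp hle).1 x' (by simp)
        exact absurd h2 (not_le.mpr h1)
    have len₂ := ih u₂ hu₂ h₂
    rw [List.length_append]
    omega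

end ChainLen
section Dec
variable {Ω : Type*} [LinearOrder Ω]

lemma wsum_le_of_sublist (w : Ω → ℕ) {C L : List Ω} (h : C <+ L) :
    (C.map w).sum ≤ (L.map w).sum :=
  (h.map w).sum_le_sum (by simp)

lemma flatten_wsum_le (w : Ω → ℕ) (ℓ : ℕ) :
    ∀ (W : List (List Ω)), (∀ l ∈ W, (l.map w).sum ≤ ℓ) →
      (W.flatten.map w).sum ≤ W.length * ℓ := by
  intro W
  induction W with
  | nil => simp
  | cons l W' ih =>
    intro h
    rw [List.flatten_cons, List.map_append, List.sum_append, List.length_cons]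
    have h1 := h l (by simp)
    have h2 := ih (fun u hu => h u (by simp [hu]))
    calc (l.map w).sum + (W'.flatten.map w).sum ≤ ℓ + W'.length * ℓ := by omega
      _ = (W'.length + 1) * ℓ := by ring

lemma dec {a b y z : Ω} (hab : a < b) (hby : b < y) (hyz : y < z) :
    ∀ (C : List Ω), C.Pairwise (· ≤ ·) →
      (∀ x ∈ C, x = a ∨ x = b ∨ (b < x ∧ x < y) ∨ x = y ∨ x = z) →
      ∃ (p q r sz : ℕ) (Cm : List Ω), (∀ x ∈ Cm, b < x ∧ x < y) ∧
        C = replicate p a ++ (replicate q b ++ (Cm ++ (replicate r y ++ replicate sz z))) := by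
  intro C
  induction C with
  | nil => exact fun _ _ => ⟨0, 0, 0, 0, [], by simp, by simp⟩
  | cons x C' ih =>
    intro hpw hcl
    obtain ⟨hx, hpw'⟩ := List.pairwise_cons.mp hpw
    obtain ⟨p, q, r, sz, Cm, hCm, rfl⟩ := ih hpw' (fun u hu => hcl u (by simp [hu]))
    have hma : p ≠ 0 → a ∈ replicate p a ++ (replicate q b ++ (Cm ++ (replicate r y ++ replicate sz z))) :=
      fun hp => List.mem_append.2 (Or.inl (List.mem_replicate.2 ⟨hp, rfl⟩))
    have hmb : q ≠ 0 → b ∈ replicate p a ++ (replicate q b ++ (Cm ++ (replicate r y ++ replicate sz z))) :=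
      fun hq => List.mem_append.2 (Or.inr (List.mem_append.2 (Or.inl (List.mem_replicate.2 ⟨hq, rfl⟩))))
    have hmm : ∀ u ∈ Cm, u ∈ replicate p a ++ (replicate q b ++ (Cm ++ (replicate r y ++ replicate sz z))) :=
      fun u hu => List.mem_append.2 (Or.inr (List.mem_append.2 (Or.inr (List.mem_append.2 (Or.inl hu)))))
    have hmy : r ≠ 0 → y ∈ replicate p a ++ (replicate q b ++ (Cm ++ (replicate r y ++ replicate sz z))) :=
      fun hr => List.mem_append.2 (Or.inr (List.mem_append.2 (Or.inr (List.mem_append.2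
        (Or.inr (List.mem_append.2 (Or.inl (List.mem_replicate.2 ⟨hr, rfl⟩))))))))
    rcases hcl x (by simp) with rfl | rfl | hmid | rfl | rfl
    · exact ⟨p+1, q, r, sz, Cm, hCm, by rw [List.replicate_succ]; simp⟩
    · have hp : p = 0 := by
        by_contra hp
        exact absurd (hx a (hma hp)) (not_le.mpr hab)
      subst hp
      exact ⟨0, q+1, r, sz, Cm, hCm, by rw [List.replicate_succ]; simp⟩
    · have hp : p = 0 := by
        by_contra hp
        exact absurd (hx a (hma hp)) (not_le.mpr (hab.trans hmid.1))
      have hq : q = 0 := by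
        by_contra hq
        exact absurd (hx b (hmb hq)) (not_le.mpr hmid.1)
      subst hp; subst hq
      refine ⟨0, 0, r, sz, x :: Cm, ?_, by simp⟩
      intro u hu
      rcases List.mem_cons.mp hu with rfl | hu
      · exact hmid
      · exact hCm u hu
    · have hp : p = 0 := by
        by_contra hp
        exact absurd (hx a (hma hp)) (not_le.mpr (hab.trans hby))
      have hq : q = 0 := by
        by_contra hq
        exact absurd (hx b (hmb hq)) (not_le.mpr hby)
      have hcm : Cm = [] := by
        cases Cm with
        | nil => rfl
        | cons u Cm' =>
          exact absurd (hx u (hmm u (by simp))) (not_le.mpr (hCm u (by simp)).2)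
      subst hp; subst hq; subst hcm
      exact ⟨0, 0, r+1, sz, [], by simp, by rw [List.replicate_succ]; simp⟩
    · have hp : p = 0 := by
        by_contra hp
        exact absurd (hx a (hma hp)) (not_le.mpr (hab.trans (hby.trans hyz)))
      have hq : q = 0 := by
        by_contra hq
        exact absurd (hx b (hmb hq)) (not_le.mpr (hby.trans hyz))
      have hcm : Cm = [] := by
        cases Cm with
        | nil => rfl
        | cons u Cm' =>
          exact absurd (hx u (hmm u (by simp))) (not_le.mpr ((hCm u (by simp)).2.trans hyz))
      have hr : r = 0 := by
        by_contra hr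
        exact absurd (hx y (hmy hr)) (not_le.mpr hyz)
      subst hp; subst hq; subst hcm; subst hr
      exact ⟨0, 0, 0, sz+1, [], by simp, by rw [List.replicate_succ]; simp⟩

end Dec

section LowerHelpers
variable {Ω : Type*} [LinearOrder Ω] {α : Type*}

lemma rep_sublist_flatten_rep {x : α} {sep : List α} (hx : x ∈ sep) :
    ∀ m : ℕ, replicate m x <+ (replicate m sep).flatten := by
  intro m
  induction m with
  | zero => simp
  | succ m ih =>
    rw [List.replicate_succ, List.replicate_succ, List.flatten_cons]
    exact List.Sublist.append (List.singleton_sublist.mpr hx) ih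

lemma lbsep1 {sep : List α} :
    ∀ (L : List (List α)), (replicate L.length sep).flatten <+ L.flatMap (fun l => l ++ sep) := by
  intro L
  induction L with
  | nil => simp
  | cons l L' ih =>
    rw [List.length_cons, List.replicate_succ, List.flatten_cons, List.flatMap_cons]
    rw [List.append_assoc]
    exact (List.Sublist.append (List.Sublist.refl sep) ih).trans (List.sublist_append_right l _)

lemma lbsep2 {sep : List α} :
    ∀ (L : List (List α)), (replicate L.length sep).flatten <+ L.flatMap (fun l => sep ++ l) := by
  intro L
  induction L with
  | nil => simp
  | cons l L' ih =>
    rw [List.length_cons, List.replicate_succ, List.flatten_cons, List.flatMap_cons]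
    rw [List.append_assoc]
    exact List.Sublist.append (List.Sublist.refl sep) (ih.trans (List.sublist_append_right l _))

lemma lb4 {a b y z : Ω} :
    ∀ (m pk qk rk sk : ℕ), pk+qk+rk+sk ≤ m →
      replicate pk a ++ (replicate qk b ++ (replicate rk y ++ replicate sk z)) <+
        (replicate m [z,y,b,a]).flatten := by
  intro m
  induction m with
  | zero =>
    intro pk qk rk sk h
    have : pk = 0 ∧ qk = 0 ∧ rk = 0 ∧ sk = 0 := by omega
    simp [this.1, this.2.1, this.2.2.1, this.2.2.2]
  | succ m ih =>
    intro pk qk rk sk h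
    rw [List.replicate_succ, List.flatten_cons]
    rw [show ([z,y,b,a] : List Ω) ++ (replicate m [z,y,b,a]).flatten
        = z :: y :: b :: a :: (replicate m [z,y,b,a]).flatten from rfl]
    match pk, qk, rk, sk with
    | 0, 0, 0, 0 => simp
    | pk+1, qk, rk, sk =>
      rw [List.replicate_succ, List.cons_append]
      refine List.sublist_cons_of_sublist z (List.sublist_cons_of_sublist y
        (List.sublist_cons_of_sublist b ?_))
      exact List.cons_sublist_cons.mpr (ih pk qk rk sk (by omega))
    | 0, qk+1, rk, sk =>
      rw [List.replicate_succ, List.cons_append]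
      simp only [List.replicate_zero, List.nil_append]
      refine List.sublist_cons_of_sublist z (List.sublist_cons_of_sublist y ?_)
      exact List.cons_sublist_cons.mpr (List.sublist_cons_of_sublist a (ih 0 qk rk sk (by omega)))
    | 0, 0, rk+1, sk =>
      rw [List.replicate_succ, List.cons_append]
      simp only [List.replicate_zero, List.nil_append]
      refine List.sublist_cons_of_sublist z ?_
      exact List.cons_sublist_cons.mpr (List.sublist_cons_of_sublist b
        (List.sublist_cons_of_sublist a (ih 0 0 rk sk (by omega))))
    | 0, 0, 0, sk+1 =>
      rw [List.replicate_succ]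
      simp only [List.replicate_zero, List.nil_append]
      exact List.cons_sublist_cons.mpr (List.sublist_cons_of_sublist y
        (List.sublist_cons_of_sublist b (List.sublist_cons_of_sublist a (ih 0 0 0 sk (by omega)))))

lemma intercalate_append_sep (sep : List α) :
    ∀ (L : List (List α)), L ≠ [] →
      intercalate sep L ++ sep = L.flatMap (fun l => l ++ sep) := by
  intro L
  induction L with
  | nil => intro h; simp at h
  | cons l L' ih =>
    intro _
    cases L' with
    | nil => rw [intercalate_single]; simp
    | cons l' L'' =>
      rw [intercalate_cons₂, List.flatMap_cons, ← ih (by simp)]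
      simp [List.append_assoc]

end LowerHelpers
section Sides
variable {Ω : Type*} [LinearOrder Ω]

lemma side1 {b y : Ω} (hby : b < y) {sL : List (List Ω)}
    (hsL : ∀ l ∈ sL, ∀ x ∈ l, b < x ∧ x < y)
    {q r : ℕ} {Cm : List Ω} (hCm : ∀ x ∈ Cm, b < x ∧ x < y) (hne : Cm ≠ [])
    (h : replicate q b ++ (Cm ++ replicate r y) <+ List.intercalate [y,b] sL) :
    q + r < sL.length ∧ Cm <+ (((sL.drop q).take (sL.length - q - r)).flatten) := by
  have hbny : (b : Ω) ≠ y := hby.ne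
  have hblk_b : ∀ l ∈ sL, b ∉ l := by
    intro l hl hbl
    exact absurd (hsL l hl b hbl).1 (lt_irrefl b)
  have s1 : Cm ++ replicate r y <+ List.intercalate [y,b] (sL.drop q) := by
    refine strip_rep (show ([y,b] : List Ω) = [y] ++ b :: [] from rfl)
      (by simp [hbny]) (by simp) q _ sL hblk_b (by simp) ?_
    simpa using h
  have hblk_y : ∀ l ∈ sL.drop q, y ∉ l := by
    intro l hl hyl
    exact absurd (hsL l (List.mem_of_mem_drop hl) y hyl).2 (lt_irrefl y)
  have s2 : Cm <+ List.intercalate [y,b] ((sL.drop q).take ((sL.drop q).length - r)) := by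
    refine strip_back (show ([y,b] : List Ω) = [] ++ y :: [b] from rfl)
      (by simp [Ne.symm hbny]) (by simp) r Cm (sL.drop q) hblk_y (by simp) s1
  rw [List.length_drop] at s2
  set W := (sL.drop q).take (sL.length - q - r) with hW
  have hWne : W ≠ [] := by
    intro hWnil
    rw [hWnil, intercalate_nil'] at s2
    exact hne (List.eq_nil_of_sublist_nil s2)
  have hqr : q + r < sL.length := by
    have h' := (List.take_eq_nil_iff).not.mp hWne
    push_neg at h'
    have h1 : sL.length - q - r ≠ 0 := h'.1
    omega
  refine ⟨hqr, ?_⟩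
  classical
  set pm : Ω → Bool := fun x => decide (b < x ∧ x < y) with hpm
  have hCmf : Cm.filter pm = Cm :=
    List.filter_eq_self.mpr (fun u hu => by simp [hpm]; exact hCm u hu)
  have hsepf : ([y,b] : List Ω).filter pm = [] := by
    simp [hpm, lt_irrefl]
  have s3 := s2.filter pm
  rw [hCmf, filter_intercalate pm _ hsepf] at s3
  have hmapW : W.map (List.filter pm) = W := by
    rw [show W.map (List.filter pm) = W.map id from ?_, List.map_id]
    refine List.map_congr_left (fun l hl => ?_)
    refine List.filter_eq_self.mpr (fun u hu => ?_)
    have hls : l ∈ sL := List.mem_of_mem_drop (List.mem_of_mem_take hl)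
    simp [hpm]
    exact hsL l hls u hu
  rwa [hmapW] at s3

lemma side2 {a b y z : Ω} (hab : a < b) (hby : b < y) (hyz : y < z)
    {tL : List (List Ω)} (htL : ∀ l ∈ tL, ∀ x ∈ l, b < x ∧ x < y)
    {p q r sz : ℕ} {Cm : List Ω} (hCm : ∀ x ∈ Cm, b < x ∧ x < y) (hne : Cm ≠ [])
    (m : ℕ)
    (h : replicate p a ++ (replicate q b ++ (Cm ++ (replicate r y ++ replicate sz z))) <+
         List.intercalate [z,y,b,a]
           (replicate m ([] : List Ω) ++ tL ++ replicate m ([] : List Ω))) :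
    (tL.drop (p + q - m)).take
        ((((2*m + tL.length) - (p+q)) - sz) - r - (m - (p+q))) ≠ [] ∧
      Cm <+ ((tL.drop (p + q - m)).take
        ((((2*m + tL.length) - (p+q)) - sz) - r - (m - (p+q)))).flatten := by
  classical
  set L₂ : List (List Ω) := replicate m ([] : List Ω) ++ tL ++ replicate m ([] : List Ω)
    with hL₂
  have hmem_mid : ∀ l ∈ L₂, ∀ x ∈ l, b < x ∧ x < y := by
    intro l hl x hx
    rcases List.mem_append.1 hl with hl | hl
    · rcases List.mem_append.1 hl with hl | hl
      · rcases (List.mem_replicate.1 hl) with ⟨_, rfl⟩; simp at hx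
      · exact htL l hl x hx
    · rcases (List.mem_replicate.1 hl) with ⟨_, rfl⟩; simp at hx
  have hna : ∀ l ∈ L₂, a ∉ l := fun l hl hal =>
    absurd (hmem_mid l hl a hal).1 (not_lt.mpr hab.le)
  have hnb : ∀ l ∈ L₂, b ∉ l := fun l hl hbl =>
    absurd (hmem_mid l hl b hbl).1 (lt_irrefl b)
  have hny : ∀ l ∈ L₂, y ∉ l := fun l hl hyl =>
    absurd (hmem_mid l hl y hyl).2 (lt_irrefl y)
  have hnz : ∀ l ∈ L₂, z ∉ l := fun l hl hzl =>
    absurd (hmem_mid l hl z hzl).2 (not_lt.mpr hyz.le)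
  have haz : a ≠ z := (hab.trans (hby.trans hyz)).ne
  have hay : a ≠ y := (hab.trans hby).ne
  have hayb : a ≠ b := hab.ne
  have hbz : b ≠ z := (hby.trans hyz).ne
  have hbyne : b ≠ y := hby.ne
  have hyzne : y ≠ z := hyz.ne
  have s1 : replicate q b ++ (Cm ++ (replicate r y ++ replicate sz z)) <+
      List.intercalate [z,y,b,a] (L₂.drop p) := by
    refine strip_rep (show ([z,y,b,a] : List Ω) = [z,y,b] ++ a :: [] from rfl)
      (by simp [haz, hay, hayb]) (by simp) p _ L₂ hna (by simp) h
  have s2 : Cm ++ (replicate r y ++ replicate sz z) <+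
      List.intercalate [z,y,b,a] (L₂.drop (p+q)) := by
    have hbzy : b ∉ ([z,y] : List Ω) := by
      simp only [List.mem_cons, List.mem_singleton]
      push_neg
      exact ⟨hbz, hbyne, List.not_mem_nil⟩
    have hbna : b ∉ ([a] : List Ω) := by
      simp only [List.mem_singleton]
      exact fun h' => hayb h'.symm
    have := strip_rep (show ([z,y,b,a] : List Ω) = [z,y] ++ b :: [a] from rfl)
      hbzy hbna q _ (L₂.drop p)
      (fun l hl => hnb l (List.mem_of_mem_drop hl)) ?_ s1
    · rwa [List.drop_drop] at this
    · intro u hu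
      rw [List.mem_singleton]
      intro hua
      subst hua
      rcases List.mem_append.1 hu with hu | hu
      · exact absurd (hCm u hu).1 (not_lt.mpr hab.le)
      · rcases List.mem_append.1 hu with hu | hu
        · exact hay (List.eq_of_mem_replicate hu)
        · exact haz (List.eq_of_mem_replicate hu)
  set M := L₂.drop (p+q) with hM
  have s2' : (Cm ++ replicate r y) ++ replicate sz z <+ List.intercalate [z,y,b,a] M := by
    rwa [List.append_assoc]
  have s3 : Cm ++ replicate r y <+
      List.intercalate [z,y,b,a] (M.take (M.length - sz)) := by
    refine strip_back (show ([z,y,b,a] : List Ω) = [] ++ z :: [y,b,a] from rfl)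
      (by simp [Ne.symm hyzne, Ne.symm hbz, Ne.symm haz]) (by simp) sz _ M
      (fun l hl => hnz l (List.mem_of_mem_drop hl)) (by simp) s2'
  set M' := M.take (M.length - sz) with hM'
  have hM'blocks : ∀ l ∈ M', y ∉ l :=
    fun l hl => hny l (List.mem_of_mem_drop (List.mem_of_mem_take hl))
  have s4 : Cm <+ List.intercalate [z,y,b,a] (M'.take (M'.length - r)) := by
    refine strip_back (show ([z,y,b,a] : List Ω) = [z] ++ y :: [b,a] from rfl)
      (by simp [hbyne.symm, hay.symm]) (by simp [hyzne]) r Cm M' hM'blocks ?_ s3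
    intro u hu
    rw [List.mem_singleton]
    intro huz
    subst huz
    exact absurd (hCm u hu).2 (not_lt.mpr hyz.le)
  have hM'len : M'.length = M.length - sz := by
    rw [hM', List.length_take, min_eq_left (Nat.sub_le _ _)]
  rw [hM'len] at s4
  have hW2' : M'.take (M.length - sz - r) = M.take (M.length - sz - r) := by
    rw [hM', List.take_take, min_eq_left (by omega : M.length - sz - r ≤ M.length - sz)]
  rw [hW2'] at s4
  set pm : Ω → Bool := fun x => decide (b < x ∧ x < y) with hpm
  have hCmf : Cm.filter pm = Cm :=
    List.filter_eq_self.mpr (fun u hu => by simp [hpm]; exact hCm u hu)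
  have hsepf : ([z,y,b,a] : List Ω).filter pm = [] := by
    have pmz : pm z = false := by
      simp only [hpm, decide_eq_false_iff_not]; rintro ⟨_, h2⟩
      exact absurd h2 (not_lt.mpr hyz.le)
    have pmy : pm y = false := by
      simp only [hpm, decide_eq_false_iff_not]; rintro ⟨_, h2⟩
      exact absurd h2 (lt_irrefl y)
    have pmb : pm b = false := by
      simp only [hpm, decide_eq_false_iff_not]; rintro ⟨h1, _⟩
      exact absurd h1 (lt_irrefl b)
    have pma : pm a = false := by
      simp only [hpm, decide_eq_false_iff_not]; rintro ⟨h1, _⟩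
      exact absurd h1 (not_lt.mpr hab.le)
    simp [List.filter, pmz, pmy, pmb, pma]
  have s5 := s4.filter pm
  rw [hCmf, filter_intercalate pm _ hsepf] at s5
  rw [List.map_take, hM, List.map_drop] at s5
  have hmapL₂ : L₂.map (List.filter pm) = L₂ := by
    rw [show L₂.map (List.filter pm) = L₂.map id from
      List.map_congr_left fun l hl => List.filter_eq_self.mpr
        (fun u hu => by simp [hpm]; exact hmem_mid l hl u hu), List.map_id]
  rw [hmapL₂] at s5
  have hL₂len : L₂.length = 2*m + tL.length := by
    simp only [hL₂, List.length_append, List.length_replicate]; omega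
  have hMlen : M.length = 2*m + tL.length - (p+q) := by
    rw [hM, List.length_drop, hL₂len]
  have hempty : ∀ l ∈ replicate m ([] : List Ω), l = [] :=
    fun l hl => List.eq_of_mem_replicate hl
  have hslice := flatten_slice_padded (B := replicate m ([] : List Ω)) hempty
    (replicate m ([] : List Ω)) hempty tL (p+q) (M.length - sz - r)
  rw [List.length_replicate] at hslice
  rw [hL₂] at s5
  rw [hslice] at s5
  rw [hMlen] at s5
  set W := (tL.drop (p + q - m)).take
    ((((2*m + tL.length) - (p+q)) - sz) - r - (m - (p+q))) with hWdef
  have hWne : W ≠ [] := by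
    intro hWnil
    rw [hWnil] at s5
    simp at s5
    exact hne s5
  exact ⟨hWne, s5⟩

end Sides
section MoreHelpers
variable {α : Type*}

lemma flatMap_replicate_nil (sep : List α) :
    ∀ k : ℕ, (replicate k ([]:List α)).flatMap (fun x => sep ++ x) = (replicate k sep).flatten := by
  intro k
  induction k with
  | zero => simp
  | succ k ih =>
    rw [List.replicate_succ, List.flatMap_cons, List.replicate_succ, List.flatten_cons, ih]
    simp

lemma flatMap_sep_cons (sep : List α) (l : List α) (L : List (List α)) :
    (l :: L).flatMap (fun x => sep ++ x) = sep ++ List.intercalate sep (l :: L) := by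
  rw [List.flatMap_cons, intercalate_eq_cons_flatMap]
  simp [List.append_assoc]

lemma flatMap_sep_ne_nil (sep : List α) (L : List (List α)) (hL : L ≠ []) :
    L.flatMap (fun x => sep ++ x) = sep ++ List.intercalate sep L := by
  cases L with
  | nil => simp at hL
  | cons l L' => exact flatMap_sep_cons sep l L'

lemma flatten_replicate_succ_right (blk : List α) (k : ℕ) :
    (replicate (k+1) blk).flatten = (replicate k blk).flatten ++ blk := by
  rw [List.replicate_succ', List.flatten_append]
  simp

end MoreHelpers

section WL
variable {Ω : Type*} [LinearOrder Ω]

lemma WLCWIS_set_nonempty (w : Ω → ℕ) (A B : List Ω) :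
    {m | ∃ C : List Ω, CWIS A B C ∧ (C.map w).sum = m}.Nonempty :=
  ⟨0, [], ⟨List.isChain_nil, List.nil_sublist _, List.nil_sublist _⟩, by simp⟩

lemma WLCWIS_set_bdd (w : Ω → ℕ) (A B : List Ω) :
    BddAbove {m | ∃ C : List Ω, CWIS A B C ∧ (C.map w).sum = m} := by
  refine ⟨(A.map w).sum, fun m hm => ?_⟩
  obtain ⟨C, ⟨_, hCA, _⟩, rfl⟩ := hm
  exact wsum_le_of_sublist w hCA

lemma le_WLCWIS (w : Ω → ℕ) {A B C : List Ω} (h : CWIS A B C) :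
    (C.map w).sum ≤ WLCWIS w A B :=
  le_csSup (WLCWIS_set_bdd w A B) ⟨C, h, rfl⟩

lemma WLCWIS_le (w : Ω → ℕ) {A B : List Ω} {m : ℕ}
    (hm : ∀ C : List Ω, CWIS A B C → (C.map w).sum ≤ m) : WLCWIS w A B ≤ m := by
  refine csSup_le (WLCWIS_set_nonempty w A B) ?_
  rintro k ⟨C, hC, rfl⟩
  exact hm C hC

lemma exists_WLCWIS (w : Ω → ℕ) (A B : List Ω) :
    ∃ C : List Ω, CWIS A B C ∧ (C.map w).sum = WLCWIS w A B :=
  Nat.sSup_mem (WLCWIS_set_nonempty w A B) (WLCWIS_set_bdd w A B)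

lemma pairwise_shape {a b y z : Ω} (hab : a < b) (hby : b < y) (hyz : y < z)
    {Cm : List Ω} (hCm : ∀ x ∈ Cm, b < x ∧ x < y) (hpw : Cm.Pairwise (· ≤ ·))
    (p q r sz : ℕ) :
    (replicate p a ++ (replicate q b ++ (Cm ++ (replicate r y ++ replicate sz z)))).Pairwise
      (· ≤ ·) := by
  have P4 : (replicate r y ++ replicate sz z).Pairwise (· ≤ ·) := by
    rw [List.pairwise_append]
    refine ⟨List.pairwise_replicate.mpr (Or.inr le_rfl),
      List.pairwise_replicate.mpr (Or.inr le_rfl), ?_⟩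
    intro u hu v hv
    rw [List.eq_of_mem_replicate hu, List.eq_of_mem_replicate hv]
    exact hyz.le
  have P3 : (Cm ++ (replicate r y ++ replicate sz z)).Pairwise (· ≤ ·) := by
    rw [List.pairwise_append]
    refine ⟨hpw, P4, ?_⟩
    intro u hu v hv
    have h1 : u ≤ y := (hCm u hu).2.le
    rcases List.mem_append.1 hv with hv | hv
    · rw [List.eq_of_mem_replicate hv]; exact h1
    · rw [List.eq_of_mem_replicate hv]; exact h1.trans hyz.le
  have P2' : (replicate q b ++ (Cm ++ (replicate r y ++ replicate sz z))).Pairwise (· ≤ ·) := by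
    rw [List.pairwise_append]
    refine ⟨List.pairwise_replicate.mpr (Or.inr le_rfl), P3, ?_⟩
    intro u hu v hv
    rw [List.eq_of_mem_replicate hu]
    rcases List.mem_append.1 hv with hv | hv
    · exact (hCm v hv).1.le
    · rcases List.mem_append.1 hv with hv | hv
      · rw [List.eq_of_mem_replicate hv]; exact hby.le
      · rw [List.eq_of_mem_replicate hv]; exact (hby.trans hyz).le
  rw [List.pairwise_append]
  refine ⟨List.pairwise_replicate.mpr (Or.inr le_rfl), P2', ?_⟩
  intro u hu v hv
  rw [List.eq_of_mem_replicate hu]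
  rcases List.mem_append.1 hv with hv | hv
  · rw [List.eq_of_mem_replicate hv]; exact hab.le
  · rcases List.mem_append.1 hv with hv | hv
    · exact (hab.trans (hCm v hv).1).le
    · rcases List.mem_append.1 hv with hv | hv
      · rw [List.eq_of_mem_replicate hv]; exact (hab.trans hby).le
      · rw [List.eq_of_mem_replicate hv]; exact (hab.trans (hby.trans hyz)).le

end WL

theorem combining_lemma {Ω : Type*} [LinearOrder Ω] (w : Ω → ℕ) {n : ℕ}
    (hn : 0 < n) (s t : Fin n → List Ω) (a b y z : Ω) (ℓ : ℕ)
    (hab : a < b) (hby : b < y) (hyz : y < z)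
    (hs : ∀ i, ∀ x ∈ s i, b < x ∧ x < y) (ht : ∀ j, ∀ x ∈ t j, b < x ∧ x < y)
    (hwa : w a = ℓ) (hwb : w b = 2*ℓ) (hwy : w y = 2*ℓ) (hwz : w z = ℓ)
    -- ℓ is the maximum total weight of any sᵢ or tⱼ
    (hℓ : ℓ = (Finset.univ.sup fun i : Fin n => ((s i).map w).sum) ⊔
              (Finset.univ.sup fun j : Fin n => ((t j).map w).sum)) :
    WLCWIS w (P1 s a b y z) (P2 t a b y z) =
      Finset.univ.sup (fun ij : Fin n × Fin n => WLCWIS w (s ij.1) (t ij.2)) +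
        (4*n - 2) * ℓ := by
  classical
  set sL : List (List Ω) := (List.finRange n).map s with hsLdef
  set tL : List (List Ω) := (List.finRange n).map t with htLdef
  have hsLlen : sL.length = n := by simp [hsLdef]
  have htLlen : tL.length = n := by simp [htLdef]
  have hsLmid : ∀ l ∈ sL, ∀ x ∈ l, b < x ∧ x < y := by
    intro l hl x hx
    obtain ⟨i, _, rfl⟩ := List.mem_map.1 hl
    exact hs i x hx
  have htLmid : ∀ l ∈ tL, ∀ x ∈ l, b < x ∧ x < y := by
    intro l hl x hx
    obtain ⟨j, _, rfl⟩ := List.mem_map.1 hl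
    exact ht j x hx
  have hsw : ∀ i, ((s i).map w).sum ≤ ℓ := by
    intro i
    rw [hℓ]
    have h1 : ((s i).map w).sum ≤ Finset.univ.sup fun i : Fin n => ((s i).map w).sum :=
      Finset.le_sup (f := fun i : Fin n => ((s i).map w).sum) (Finset.mem_univ i)
    exact h1.trans le_sup_left
  have htw : ∀ j, ((t j).map w).sum ≤ ℓ := by
    intro j
    rw [hℓ]
    have h1 : ((t j).map w).sum ≤ Finset.univ.sup fun j : Fin n => ((t j).map w).sum :=
      Finset.le_sup (f := fun j : Fin n => ((t j).map w).sum) (Finset.mem_univ j)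
    exact h1.trans le_sup_right
  set Mx : ℕ := Finset.univ.sup (fun ij : Fin n × Fin n => WLCWIS w (s ij.1) (t ij.2)) with hMx
  have hP2 : P2 t a b y z
      = List.intercalate [z,y,b,a]
          (replicate n ([] : List Ω) ++ tL ++ replicate n ([] : List Ω)) := by
    obtain ⟨n', rfl⟩ : ∃ n', n = n' + 1 := ⟨n - 1, by omega⟩
    have htLne : tL ≠ [] := by
      intro h'
      rw [← List.length_eq_zero_iff, htLlen] at h'
      omega
    have hsplit : (replicate (n'+1) ([] : List Ω) ++ tL ++ replicate (n'+1) ([] : List Ω))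
        = [] :: (replicate n' ([] : List Ω) ++ tL ++ replicate (n'+1) ([] : List Ω)) := by
      rw [List.replicate_succ]; rfl
    rw [hsplit, intercalate_eq_cons_flatMap, List.flatMap_append, List.flatMap_append,
      flatMap_replicate_nil, flatMap_replicate_nil, flatMap_sep_ne_nil _ _ htLne]
    simp only [P2]
    rw [flatten_replicate_succ_right]
    simp [List.append_assoc]
    rfl
  apply _root_.le_antisymm
  · -- UPPER BOUND
    apply WLCWIS_le
    intro C hC
    obtain ⟨hch, hCP1, hCP2⟩ := hC
    have hPW : C.Pairwise (· ≤ ·) := List.isChain_iff_pairwise.mp hch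
    have hclass : ∀ x ∈ C, x = a ∨ x = b ∨ (b < x ∧ x < y) ∨ x = y ∨ x = z := by
      intro x hx
      have hxP1 : x ∈ P1 s a b y z := hCP1.subset hx
      simp only [P1] at hxP1
      rcases List.mem_append.1 hxP1 with hx1 | hx1
      · rcases List.mem_append.1 hx1 with hx1 | hx1
        · exact Or.inl (List.eq_of_mem_replicate hx1)
        · rcases mem_intercalate' hx1 with hx2 | ⟨l, hl, hxl⟩
          · rcases List.mem_cons.1 hx2 with rfl | hx3
            · exact Or.inr (Or.inr (Or.inr (Or.inl rfl)))
            · rw [List.mem_singleton.1 hx3]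
              exact Or.inr (Or.inl rfl)
          · exact Or.inr (Or.inr (Or.inl (hsLmid l hl x hxl)))
      · exact Or.inr (Or.inr (Or.inr (Or.inr (List.eq_of_mem_replicate hx1))))
    obtain ⟨p, q, r, sz, Cm, hCmmid, hCeq⟩ := dec hab hby hyz C hPW hclass
    have hwsum : (C.map w).sum
        = (p + 2*q + 2*r + sz) * ℓ + (Cm.map w).sum := by
      rw [hCeq]
      simp only [List.map_append, List.sum_append, List.map_replicate, List.sum_replicate,
        smul_eq_mul, hwa, hwb, hwy, hwz]
      ring
    by_cases hCme : Cm = []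
    · -- EMPTY MIDDLE CASE
      subst hCme
      simp only [List.nil_append] at hCeq
      set pby : Ω → Bool := fun x => decide (x = b ∨ x = y) with hpby
      have pbya : pby a = false := by
        simp only [hpby, decide_eq_false_iff_not]
        push_neg
        exact ⟨hab.ne, (hab.trans hby).ne⟩
      have pbyb : pby b = true := by simp [hpby]
      have pbyy : pby y = true := by simp [hpby]
      have pbyz : pby z = false := by
        simp only [hpby, decide_eq_false_iff_not]
        push_neg
        exact ⟨(hby.trans hyz).ne', hyz.ne'⟩
      have hCf : C.filter pby = replicate q b ++ replicate r y := by
        rw [hCeq]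
        simp only [List.filter_append, List.filter_replicate, pbya, pbyb, pbyy, pbyz]
        simp
      have hP1f : (P1 s a b y z).filter pby = (replicate (n-1) ([y,b] : List Ω)).flatten := by
        simp only [P1, List.filter_append]
        rw [List.filter_replicate, List.filter_replicate, if_neg (by simp [pbya]),
          if_neg (by simp [pbyz])]
        rw [filter_intercalate_blocks_nil pby [y,b] sL ?hblk]
        case hblk =>
          intro l hl
          rw [List.filter_eq_nil_iff]
          intro u hu
          have hmid := hsLmid l hl u hu
          simp only [hpby, decide_eq_true_eq]
          push_neg
          exact ⟨ne_of_gt hmid.1, ne_of_lt hmid.2⟩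
        rw [hsLlen]
        have : ([y,b] : List Ω).filter pby = [y,b] := by
          simp [List.filter, pbyy, pbyb]
        rw [this]
        simp
      have h1 : replicate q b ++ replicate r y <+ (replicate (n-1) ([y,b]:List Ω)).flatten := by
        rw [← hCf, ← hP1f]; exact hCP1.filter pby
      have hu_pw : (replicate q b ++ replicate r y).Pairwise (· ≤ ·) := by
        rw [← hCf]; exact List.Pairwise.sublist (List.filter_sublist (l := C)) hPW
      have hybpw : ([y,b] : List Ω).Pairwise (· > ·) :=
        List.Pairwise.cons (fun x hx => by rw [List.mem_singleton.1 hx]; exact hby)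
          (List.pairwise_singleton _ b)
      have hqr : q + r ≤ n - 1 := by
        have := chain_sublist_flatten_replicate hybpw (n-1) _ hu_pw h1
        simpa using this
      set pall : Ω → Bool := fun x => decide (x = a ∨ x = b ∨ x = y ∨ x = z) with hpall
      have hCall : C.filter pall = C := by
        rw [List.filter_eq_self]
        intro u hu
        rw [hCeq] at hu
        simp only [hpall, decide_eq_true_eq]
        rcases List.mem_append.1 hu with h' | h'
        · exact Or.inl (List.eq_of_mem_replicate h')
        · rcases List.mem_append.1 h' with h' | h'
          · exact Or.inr (Or.inl (List.eq_of_mem_replicate h'))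
          · rcases List.mem_append.1 h' with h' | h'
            · exact Or.inr (Or.inr (Or.inl (List.eq_of_mem_replicate h')))
            · exact Or.inr (Or.inr (Or.inr (List.eq_of_mem_replicate h')))
      have hblkall : ([z,y,b,a] : List Ω).filter pall = [z,y,b,a] := by
        refine List.filter_eq_self.mpr ?_
        intro u hu
        simp only [hpall, decide_eq_true_eq]
        rcases List.mem_cons.1 hu with rfl | hu
        · exact Or.inr (Or.inr (Or.inr rfl))
        rcases List.mem_cons.1 hu with rfl | hu
        · exact Or.inr (Or.inr (Or.inl rfl))
        rcases List.mem_cons.1 hu with rfl | hu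
        · exact Or.inr (Or.inl rfl)
        rw [List.mem_singleton.1 hu]
        exact Or.inl rfl
      have hP2f : (P2 t a b y z).filter pall
          = (replicate (3*n - 1) ([z,y,b,a] : List Ω)).flatten := by
        rw [hP2, filter_intercalate_blocks_nil pall _ _ ?hblk2]
        case hblk2 =>
          intro l hl
          rw [List.filter_eq_nil_iff]
          intro u hu
          rcases List.mem_append.1 hl with hl' | hl'
          · rcases List.mem_append.1 hl' with hl' | hl'
            · rw [List.eq_of_mem_replicate hl'] at hu; simp at hu
            · have hmid := htLmid l hl' u hu
              simp only [hpall, decide_eq_true_eq]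
              push_neg
              refine ⟨?_, ?_, ?_, ?_⟩
              · exact ne_of_gt (hab.trans hmid.1)
              · exact ne_of_gt hmid.1
              · exact ne_of_lt hmid.2
              · exact ne_of_lt (hmid.2.trans hyz)
          · rw [List.eq_of_mem_replicate hl'] at hu; simp at hu
        rw [hblkall]
        have hlen : (replicate n ([]:List Ω) ++ tL ++ replicate n ([]:List Ω)).length - 1
            = 3*n - 1 := by
          simp [htLlen]
          omega
        rw [hlen]
      have h2 : C <+ (replicate (3*n - 1) ([z,y,b,a]:List Ω)).flatten := by
        rw [← hCall, ← hP2f]; exact hCP2.filter pall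
      have hblkpw : ([z,y,b,a] : List Ω).Pairwise (· > ·) := by
        refine List.Pairwise.cons ?_ (List.Pairwise.cons ?_
          (List.Pairwise.cons ?_ (List.pairwise_singleton _ a)))
        · intro x hx
          rcases List.mem_cons.1 hx with rfl | hx
          · exact hyz
          rcases List.mem_cons.1 hx with rfl | hx
          · exact hby.trans hyz
          rw [List.mem_singleton.1 hx]
          exact hab.trans (hby.trans hyz)
        · intro x hx
          rcases List.mem_cons.1 hx with rfl | hx
          · exact hby
          rw [List.mem_singleton.1 hx]
          exact hab.trans hby
        · intro x hx
          rw [List.mem_singleton.1 hx]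
          exact hab
      have hlenC : C.length = p + q + r + sz := by
        rw [hCeq]; simp; omega
      have h3 : p + q + r + sz ≤ 3*n - 1 := by
        have := chain_sublist_flatten_replicate hblkpw (3*n-1) C hPW h2
        omega
      rw [hwsum]
      simp only [List.map_nil, List.sum_nil, Nat.add_zero]
      calc (p + 2*q + 2*r + sz) * ℓ ≤ (4*n - 2) * ℓ :=
            Nat.mul_le_mul_right _ (by omega)
        _ ≤ Mx + (4*n - 2) * ℓ := Nat.le_add_left _ _
    · -- MAIN CASE
      set pmb : Ω → Bool := fun x => decide (b ≤ x ∧ x ≤ y) with hpmb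
      have pmba : pmb a = false := by
        simp only [hpmb, decide_eq_false_iff_not]
        rintro ⟨h1, _⟩; exact absurd h1 (not_le.mpr hab)
      have pmbz : pmb z = false := by
        simp only [hpmb, decide_eq_false_iff_not]
        rintro ⟨_, h2⟩; exact absurd h2 (not_le.mpr hyz)
      have pmbb : pmb b = true := by simp [hpmb, hby.le]
      have pmby : pmb y = true := by simp [hpmb, hby.le]
      have pmbmid : ∀ u, b < u → u < y → pmb u = true := fun u h1 h2 => by
        simp [hpmb, h1.le, h2.le]
      have hCfm : C.filter pmb = replicate q b ++ (Cm ++ replicate r y) := by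
        rw [hCeq]
        simp only [List.filter_append, List.filter_replicate, pmba, pmbb, pmby, pmbz]
        rw [List.filter_eq_self.mpr (fun u hu => pmbmid u (hCmmid u hu).1 (hCmmid u hu).2)]
        simp
      have hP1fm : (P1 s a b y z).filter pmb = List.intercalate [y,b] sL := by
        simp only [P1, List.filter_append]
        rw [List.filter_replicate, List.filter_replicate,
          if_neg (by simp [pmba]), if_neg (by simp [pmbz])]
        rw [List.filter_eq_self.mpr ?hmm]
        · simp [hsLdef]
        case hmm =>
          intro u hu
          rcases mem_intercalate' hu with h' | ⟨l, hl, hul⟩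
          · rcases List.mem_cons.1 h' with rfl | h''
            · exact pmby
            · rw [List.mem_singleton.1 h'']; exact pmbb
          · exact pmbmid u (hsLmid l hl u hul).1 (hsLmid l hl u hul).2
      have hS1 := side1 hby hsLmid hCmmid hCme
        (by rw [← hCfm, ← hP1fm]; exact hCP1.filter pmb)
      rw [hsLlen] at hS1
      obtain ⟨hqr, hCmW1⟩ := hS1
      have hS2 := side2 hab hby hyz htLmid hCmmid hCme n
        (by rw [← hP2, ← hCeq]; exact hCP2)
      rw [htLlen] at hS2
      obtain ⟨hW2ne, hCmW2⟩ := hS2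
      set W₁ := (sL.drop q).take (n - q - r) with hW₁def
      set W₂ := (tL.drop (p + q - n)).take (2*n + n - (p+q) - sz - r - (n - (p+q)))
        with hW₂def
      set len1 := W₁.length with hlen1def
      set len2 := W₂.length with hlen2def
      have hlen1a : len1 ≤ n - q - r := by
        rw [hlen1def, hW₁def, List.length_take]; exact min_le_left _ _
      have hlen1b : 1 ≤ len1 := by
        rw [hlen1def]
        refine List.length_pos_iff.mpr ?_
        intro h'
        rw [h'] at hCmW1
        simp at hCmW1
        exact hCme hCmW1
      have hlen2a : len2 ≤ 2*n + n - (p+q) - sz - r - (n - (p+q)) := by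
        rw [hlen2def, hW₂def, List.length_take]; exact min_le_left _ _
      have hlen2b : 1 ≤ len2 := by
        rw [hlen2def]; exact List.length_pos_iff.mpr hW2ne
      have hlen2c : len2 ≤ n - (p + q - n) := by
        rw [hlen2def, hW₂def, List.length_take]
        refine le_trans (min_le_right _ _) ?_
        rw [List.length_drop, htLlen]
      set D := (len1 - 1) + (len2 - 1) with hD
      have hCmC : Cm <+ C := by
        rw [hCeq]
        exact (List.sublist_append_left Cm _).trans
          ((List.sublist_append_right (replicate q b) _).trans
            (List.sublist_append_right (replicate p a) _))
      have hCmpw : Cm.Pairwise (· ≤ ·) := List.Pairwise.sublist hCmC hPW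
      have hWm : (Cm.map w).sum ≤ Mx + D * ℓ := by
        by_cases h11 : len1 = 1 ∧ len2 = 1
        · obtain ⟨hl1e, hl2e⟩ := h11
          obtain ⟨l₁, hl₁⟩ := List.length_eq_one_iff.mp (by rw [← hlen1def]; exact hl1e)
          obtain ⟨l₂, hl₂⟩ := List.length_eq_one_iff.mp (by rw [← hlen2def]; exact hl2e)
          have hl₁mem : l₁ ∈ sL := by
            have h' : l₁ ∈ W₁ := by rw [hl₁]; simp
            rw [hW₁def] at h'
            exact List.mem_of_mem_drop (List.mem_of_mem_take h')
          have hl₂mem : l₂ ∈ tL := by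
            have h' : l₂ ∈ W₂ := by rw [hl₂]; simp
            rw [hW₂def] at h'
            exact List.mem_of_mem_drop (List.mem_of_mem_take h')
          obtain ⟨i₀, -, hi₀⟩ := List.mem_map.1 (hsLdef ▸ hl₁mem)
          obtain ⟨j₀, -, hj₀⟩ := List.mem_map.1 (htLdef ▸ hl₂mem)
          have hsub1 : Cm <+ s i₀ := by
            rw [hi₀]
            have h' := hCmW1
            rw [hl₁] at h'
            simpa using h'
          have hsub2 : Cm <+ t j₀ := by
            rw [hj₀]
            have h' := hCmW2
            rw [hl₂] at h'
            simpa using h'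
          have hcw : CWIS (s i₀) (t j₀) Cm :=
            ⟨List.isChain_iff_pairwise.mpr hCmpw, hsub1, hsub2⟩
          have hle1 := le_WLCWIS w hcw
          have hle2 : WLCWIS w (s i₀) (t j₀) ≤ Mx := by
            rw [hMx]
            exact Finset.le_sup
              (f := fun ij : Fin n × Fin n => WLCWIS w (s ij.1) (t ij.2))
              (Finset.mem_univ (i₀, j₀))
          have hD0 : D = 0 := by omega
          rw [hD0]
          simpa using hle1.trans hle2
        · have hb1 : (Cm.map w).sum ≤ len1 * ℓ := by
            refine le_trans (wsum_le_of_sublist w hCmW1) ?_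
            rw [hlen1def]
            refine flatten_wsum_le w ℓ W₁ ?_
            intro l hl
            have hls : l ∈ sL := List.mem_of_mem_drop (List.mem_of_mem_take hl)
            obtain ⟨i, _, rfl⟩ := List.mem_map.1 hls
            exact hsw i
          have hb2 : (Cm.map w).sum ≤ len2 * ℓ := by
            refine le_trans (wsum_le_of_sublist w hCmW2) ?_
            rw [hlen2def]
            refine flatten_wsum_le w ℓ W₂ ?_
            intro l hl
            have hls : l ∈ tL := List.mem_of_mem_drop (List.mem_of_mem_take hl)
            obtain ⟨j, _, rfl⟩ := List.mem_map.1 hls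
            exact htw j
          have hor : len1 ≤ D ∨ len2 ≤ D := by omega
          rcases hor with h' | h'
          · exact le_trans (le_trans hb1 (Nat.mul_le_mul_right _ h')) (Nat.le_add_left _ _)
          · exact le_trans (le_trans hb2 (Nat.mul_le_mul_right _ h')) (Nat.le_add_left _ _)
      have hcoef : p + 2*q + 2*r + sz + D ≤ 4*n - 2 := by omega
      rw [hwsum]
      calc (p + 2*q + 2*r + sz) * ℓ + (Cm.map w).sum
          ≤ (p + 2*q + 2*r + sz) * ℓ + (Mx + D * ℓ) := Nat.add_le_add_left hWm _
        _ = Mx + (p + 2*q + 2*r + sz + D) * ℓ := by ring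
        _ ≤ Mx + (4*n - 2) * ℓ := Nat.add_le_add_left (Nat.mul_le_mul_right _ hcoef) _
  · -- LOWER BOUND
    have hnuniv : (Finset.univ : Finset (Fin n × Fin n)).Nonempty :=
      ⟨((⟨0, hn⟩ : Fin n), (⟨0, hn⟩ : Fin n)), Finset.mem_univ _⟩
    obtain ⟨ij, -, hMeq⟩ := Finset.exists_mem_eq_sup Finset.univ hnuniv
      (fun ij : Fin n × Fin n => WLCWIS w (s ij.1) (t ij.2))
    obtain ⟨C₀, hC₀, hW₀⟩ := exists_WLCWIS w (s ij.1) (t ij.2)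
    set iv := (ij.1 : ℕ) with hivdef
    set jv := (ij.2 : ℕ) with hjvdef
    have hivlt : iv < n := ij.1.isLt
    have hjvlt : jv < n := ij.2.isLt
    have hC₀mid : ∀ x ∈ C₀, b < x ∧ x < y := fun x hx => hs ij.1 x (hC₀.2.1.subset hx)
    set Cstar := replicate (n + jv - iv) a ++ (replicate iv b ++ (C₀ ++
      (replicate (n - (iv+1)) y ++ replicate (n + iv - jv) z))) with hCstar
    have hsub1 : Cstar <+ P1 s a b y z := by
      have hivlt' : iv < sL.length := by rw [hsLlen]; exact hivlt
      have hgetl : sL[iv]'hivlt' = s ij.1 := by simp [hsLdef]; rfl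
      have hsplit := intercalate_split [y,b] iv sL hivlt'
      simp only [P1]
      rw [← hsLdef, hsplit, hgetl]
      have g1 : replicate (n + jv - iv) a <+ replicate (2*n) a :=
        (List.replicate_sublist_replicate a).mpr (by omega)
      have g2 : replicate iv b <+ (sL.take iv).flatMap (fun l => l ++ [y,b]) := by
        refine (rep_sublist_flatten_rep (by simp : b ∈ ([y,b]:List Ω)) iv).trans ?_
        have h' := lbsep1 (sep := ([y,b]:List Ω)) (sL.take iv)
        rwa [List.length_take, min_eq_left (by omega : iv ≤ sL.length)] at h'
      have g4 : replicate (n - (iv+1)) y <+ (sL.drop (iv+1)).flatMap (fun l => [y,b] ++ l) := by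
        refine (rep_sublist_flatten_rep (by simp : y ∈ ([y,b]:List Ω)) (n - (iv+1))).trans ?_
        have h' := lbsep2 (sep := ([y,b]:List Ω)) (sL.drop (iv+1))
        rwa [List.length_drop, hsLlen] at h'
      have g5 : replicate (n + iv - jv) z <+ replicate (2*n) z :=
        (List.replicate_sublist_replicate z).mpr (by omega)
      rw [hCstar]
      simp only [List.append_assoc]
      exact g1.append (g2.append (hC₀.2.1.append (g4.append g5)))
    have hsub2 : Cstar <+ P2 t a b y z := by
      rw [hP2]
      set L₂ := replicate n ([]:List Ω) ++ tL ++ replicate n ([]:List Ω) with hL₂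
      have hL₂len : L₂.length = 3*n := by
        rw [hL₂]
        simp [htLlen]
        omega
      have hidx : n + jv < L₂.length := by omega
      have hgetl2 : L₂[n + jv]'hidx = t ij.2 := by
        have e1 := List.getElem_of_eq hL₂ hidx
        rw [e1]
        rw [List.getElem_append_left (by simp [htLlen]; omega)]
        rw [List.getElem_append_right (by simp)]
        simp [htLdef]
        rfl
      rw [intercalate_split [z,y,b,a] (n+jv) L₂ hidx, hgetl2]
      have g12 : replicate (n + jv - iv) a ++ replicate iv b <+
          (L₂.take (n+jv)).flatMap (fun l => l ++ [z,y,b,a]) := by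
        have h1 : replicate (n + jv - iv) a ++ replicate iv b <+
            (replicate (n+jv) ([z,y,b,a]:List Ω)).flatten := by
          have h' := lb4 (a := a) (b := b) (y := y) (z := z) (n+jv) (n+jv-iv) iv 0 0 (by omega)
          simpa using h'
        refine h1.trans ?_
        have h' := lbsep1 (sep := ([z,y,b,a]:List Ω)) (L₂.take (n+jv))
        rwa [List.length_take, min_eq_left (by omega : n+jv ≤ L₂.length)] at h'
      have g45 : replicate (n - (iv+1)) y ++ replicate (n + iv - jv) z <+
          (L₂.drop (n+jv+1)).flatMap (fun l => [z,y,b,a] ++ l) := by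
        have h1 : replicate (n - (iv+1)) y ++ replicate (n + iv - jv) z <+
            (replicate (2*n - 1 - jv) ([z,y,b,a]:List Ω)).flatten := by
          have h' := lb4 (a := a) (b := b) (y := y) (z := z) (2*n - 1 - jv) 0 0
            (n - (iv+1)) (n + iv - jv) (by omega)
          simpa using h'
        refine h1.trans ?_
        have h' := lbsep2 (sep := ([z,y,b,a]:List Ω)) (L₂.drop (n+jv+1))
        rwa [List.length_drop, hL₂len, show 3*n - (n+jv+1) = 2*n - 1 - jv by omega] at h'
      have hC' : Cstar = ((replicate (n + jv - iv) a ++ replicate iv b) ++ C₀) ++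
          (replicate (n - (iv+1)) y ++ replicate (n + iv - jv) z) := by
        rw [hCstar]
        simp [List.append_assoc]
      rw [hC']
      exact (g12.append hC₀.2.2).append g45
    have hchain : Cstar.Chain' (· ≤ ·) :=
      List.isChain_iff_pairwise.mpr (pairwise_shape hab hby hyz hC₀mid
        (List.isChain_iff_pairwise.mp hC₀.1) _ _ _ _)
    have hle := le_WLCWIS w ⟨hchain, hsub1, hsub2⟩
    have hsum : (Cstar.map w).sum = WLCWIS w (s ij.1) (t ij.2) + (4*n - 2) * ℓ := by
      rw [hCstar]
      simp only [List.map_append, List.sum_append, List.map_replicate, List.sum_replicate,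
        smul_eq_mul, hwa, hwb, hwy, hwz, hW₀]
      rw [show (4*n - 2) = (n + jv - iv) + 2*iv + 2*(n - (iv+1)) + (n + iv - jv) from by omega]
      ring
    rw [hMx, hMeq]
    have hfinal : WLCWIS w (s ij.1) (t ij.2) + (4*n - 2) * ℓ
        ≤ WLCWIS w (P1 s a b y z) (P2 t a b y z) := by
      rw [← hsum]; exact hle
    exact hfinal
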